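/- Let β > 0, μ > 0, γ > 0, p ∈ (0,1), δ = β/(γ+μ), and consider positive numbers A for which setting S0 = 1/(δ(γ/μ+1)A + 1) and S1 = (1-p)δ(γ/μ+1)A/(δ(γ/μ+1)A + 1)² gives pS0 + S1 = 1/δ (i.e., endemic equilibria of the temporary adoption model). (I) If p < 1/2: there is no such A for δ < 4(1-p); there are exactly two (A₁ > A₂ > 0) for 4(1-p) < δ < 1/p; and exactly one (A₁) for δ ≥ 1/p. (II) If p ≥ 1/2: there is none for δ ≤ 1/p and exactly one (A₁) for δ > 1/p. Here A₁,₂ = (1/2)(1 + γ/μ)⁻¹(1 - 2/δ ± √(1 - 4(1-p)/δ)). -/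

import Mathlib

private lemma memQ (μ γ p δ c A : ℝ) (hδ0 : 0 < δ) (hcpos : 0 < c) (hA : 0 < A) :
    (p * (1 / (c * A + 1)) + (1 - p) * c * A / (c * A + 1) ^ 2 = 1 / δ) ↔
    (c^2*A^2 + c*(2-δ)*A + (1-δ*p) = 0) := by
  have h1 : (0:ℝ) < c * A + 1 := by positivity
  constructor <;> intro h
  · field_simp at h
    have h2 : (c*A+1) * (c^2*A^2 + c*(2-δ)*A + (1-δ*p)) = 0 := by linear_combination -(c*A+1)*h
    exact (mul_eq_zero.mp h2).resolve_left h1.ne'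
  · field_simp
    linear_combination -h

private lemma facQ (μ γ p δ c s A₁ A₂ : ℝ) (hμ : 0 < μ) (hγ : 0 < γ) (hδ0 : 0 < δ)
    (hc : c = δ * (γ / μ + 1))
    (hs2 : s^2 = 1 - 4 * (1 - p) / δ)
    (h1 : A₁ = (1 / 2) * (1 + γ / μ)⁻¹ * (1 - 2 / δ + s))
    (h2 : A₂ = (1 / 2) * (1 + γ / μ)⁻¹ * (1 - 2 / δ - s)) :
    ∀ A : ℝ, c^2*A^2 + c*(2-δ)*A + (1-δ*p) = c^2*(A-A₁)*(A-A₂) := by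
  have hμ' : μ ≠ 0 := hμ.ne'
  have hδ' : δ ≠ 0 := hδ0.ne'
  have hinv : (1 + γ / μ)⁻¹ = μ/(μ+γ) := by
    rw [eq_div_iff (by positivity)]
    field_simp
  have hsum : c*(A₁+A₂) = δ - 2 := by
    subst hc h1 h2; rw [hinv]; field_simp; ring
  have h12 : A₁*A₂ = (1/4)*(μ/(μ+γ))^2*((1-2/δ)^2 - (1 - 4*(1-p)/δ)) := by
    rw [h1, h2, hinv, ← hs2]; ring
  have hprod : c^2*(A₁*A₂) = 1 - δ*p := by
    rw [h12, hc]; field_simp; ring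
  intro A
  linear_combination (c*A)*hsum - hprod

set_option maxHeartbeats 1000000 in


/-- classification of the positive endemic equilibrium levels of the
temporary adoption model, according to the cases `p < 1/2` and `p ≥ 1/2`. -/
theorem stmt_11 (β μ γ p δ : ℝ) (hβ : 0 < β) (hμ : 0 < μ) (hγ : 0 < γ)
    (hp : p ∈ Set.Ioo (0:ℝ) 1) (hδ : δ = β / (γ + μ)) :
    let c : ℝ := δ * (γ / μ + 1)
    let A₁ : ℝ := (1 / 2) * (1 + γ / μ)⁻¹ * (1 - 2 / δ + Real.sqrt (1 - 4 * (1 - p) / δ))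
    let A₂ : ℝ := (1 / 2) * (1 + γ / μ)⁻¹ * (1 - 2 / δ - Real.sqrt (1 - 4 * (1 - p) / δ))
    let S : Set ℝ := {A : ℝ | 0 < A ∧
      p * (1 / (c * A + 1)) + (1 - p) * c * A / (c * A + 1) ^ 2 = 1 / δ}
    (p < 1 / 2 →
      (δ < 4 * (1 - p) → S = ∅) ∧
      (4 * (1 - p) < δ → δ < 1 / p → S = {A₁, A₂} ∧ A₂ < A₁ ∧ 0 < A₂) ∧
      (1 / p ≤ δ → S = {A₁})) ∧
    (1 / 2 ≤ p →
      (δ ≤ 1 / p → S = ∅) ∧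
      (1 / p < δ → S = {A₁})) := by
  obtain ⟨hp0, hp1⟩ := hp
  intro c A₁ A₂ S
  have hδ0 : 0 < δ := by rw [hδ]; positivity
  have hδ' : δ ≠ 0 := hδ0.ne'
  have hgm : (0:ℝ) < 1 + γ/μ := by positivity
  have hcpos : 0 < c := by show (0:ℝ) < δ * (γ/μ+1); positivity
  set s : ℝ := Real.sqrt (1 - 4 * (1 - p) / δ) with hs
  have hs0 : 0 ≤ s := Real.sqrt_nonneg _
  have hc : c = δ * (γ / μ + 1) := rfl
  have h1 : A₁ = (1 / 2) * (1 + γ / μ)⁻¹ * (1 - 2 / δ + s) := rfl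
  have h2 : A₂ = (1 / 2) * (1 + γ / μ)⁻¹ * (1 - 2 / δ - s) := rfl
  have hSdef : S = {A : ℝ | 0 < A ∧
      p * (1 / (c * A + 1)) + (1 - p) * c * A / (c * A + 1) ^ 2 = 1 / δ} := rfl
  clear_value S A₁ A₂ c
  have hmem : ∀ A : ℝ, A ∈ S ↔ 0 < A ∧ c^2*A^2 + c*(2-δ)*A + (1-δ*p) = 0 := by
    intro A
    rw [hSdef, Set.mem_setOf_eq]
    constructor
    · rintro ⟨hA, hE⟩
      exact ⟨hA, (memQ μ γ p δ c A hδ0 hcpos hA).mp hE⟩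
    · rintro ⟨hA, hE⟩
      exact ⟨hA, (memQ μ γ p δ c A hδ0 hcpos hA).mpr hE⟩
  -- common helper facts
  have h4p : 4*p*(1-p) ≤ 1 := by nlinarith [sq_nonneg (2*p - 1)]
  constructor
  · -- p < 1/2
    intro hp2
    have h4gt2 : (2:ℝ) < 4*(1-p) := by nlinarith
    refine ⟨?_, ?_, ?_⟩
    · -- δ < 4(1-p) → S = ∅
      intro hlt
      ext A
      simp only [Set.mem_empty_iff_false, iff_false]
      intro hA
      obtain ⟨hApos, hQ⟩ := (hmem A).mp hA
      nlinarith [sq_nonneg (2*c*A + (2-δ)), mul_pos hcpos hcpos, hQ, hδ0]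
    · -- 4(1-p) < δ < 1/p → two roots
      intro hd1 hd2
      have hδ2 : (2:ℝ) < δ := lt_trans h4gt2 hd1
      have hδp1 : δ*p < 1 := by
        rw [lt_div_iff₀ hp0] at hd2; linarith
      have hDpos : 0 < 1 - 4*(1-p)/δ := by
        rw [sub_pos, div_lt_one hδ0]; exact hd1
      have hs2 : s^2 = 1 - 4*(1-p)/δ := Real.sq_sqrt hDpos.le
      have hspos : 0 < s := Real.sqrt_pos.mpr hDpos
      have hfac := facQ μ γ p δ c s A₁ A₂ hμ hγ hδ0 hc hs2 h1 h2
      have h1δ : 0 < 1 - 2/δ := by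
        rw [sub_pos, div_lt_one hδ0]; exact hδ2
      have d1 : (1 - 2/δ)^2 - s^2 = 4*(1-δ*p)/δ^2 := by
        rw [hs2]; field_simp; ring
      have hd1pos : 0 < 4*(1-δ*p)/δ^2 := by
        have : 0 < 1 - δ*p := by linarith
        positivity
      have hslt : s < 1 - 2/δ := by
        refine lt_of_pow_lt_pow_left₀ 2 h1δ.le ?_
        nlinarith
      have hA2pos : 0 < A₂ := by
        rw [h2]
        have : 0 < 1 - 2/δ - s := by linarith
        positivity
      have hA21 : A₂ < A₁ := by
        rw [h1, h2]
        have hinvpos : 0 < (1 + γ/μ)⁻¹ := by positivity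
        nlinarith
      have hA1pos : 0 < A₁ := lt_trans hA2pos hA21
      refine ⟨?_, hA21, hA2pos⟩
      ext A
      simp only [Set.mem_insert_iff, Set.mem_singleton_iff, hmem A]
      constructor
      · rintro ⟨hApos, hQ⟩
        rw [hfac A] at hQ
        rcases mul_eq_zero.mp hQ with h | h
        · rcases mul_eq_zero.mp h with h | h
          · exact absurd h (by positivity)
          · exact Or.inl (by linarith [sub_eq_zero.mp h])
        · exact Or.inr (by linarith [sub_eq_zero.mp h])
      · rintro (rfl | rfl)
        · exact ⟨hA1pos, by rw [hfac]; ring⟩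
        · exact ⟨hA2pos, by rw [hfac]; ring⟩
    · -- 1/p ≤ δ → S = {A₁}
      intro hd
      have hδp1 : 1 ≤ δ*p := by
        rw [div_le_iff₀ hp0] at hd; linarith
      have h2p : (2:ℝ) < 1/p := by
        rw [lt_div_iff₀ hp0]; nlinarith
      have hδ2 : (2:ℝ) < δ := lt_of_lt_of_le h2p hd
      have h1δ : 0 < 1 - 2/δ := by
        rw [sub_pos, div_lt_one hδ0]; exact hδ2
      have h4pδ : 4*(1-p) < δ := by
        calc 4*(1-p) < 1/p := by rw [lt_div_iff₀ hp0]; nlinarith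
        _ ≤ δ := hd
      have hDpos : 0 < 1 - 4*(1-p)/δ := by
        rw [sub_pos, div_lt_one hδ0]; exact h4pδ
      have hs2 : s^2 = 1 - 4*(1-p)/δ := Real.sq_sqrt hDpos.le
      have hfac := facQ μ γ p δ c s A₁ A₂ hμ hγ hδ0 hc hs2 h1 h2
      have d1 : s^2 - (1 - 2/δ)^2 = 4*(δ*p-1)/δ^2 := by
        rw [hs2]; field_simp; ring
      have hd1nn : 0 ≤ 4*(δ*p-1)/δ^2 := by
        have : 0 ≤ δ*p - 1 := by linarith
        positivity
      have hsle : 1 - 2/δ ≤ s := by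
        refine le_of_pow_le_pow_left₀ two_ne_zero hs0 ?_
        nlinarith
      have hA1pos : 0 < A₁ := by
        rw [h1]
        have : 0 < 1 - 2/δ + s := by linarith
        positivity
      have hA2np : A₂ ≤ 0 := by
        rw [h2]
        have h' : 1 - 2/δ - s ≤ 0 := by linarith
        have hinvpos : 0 ≤ (1 + γ/μ)⁻¹ := by positivity
        nlinarith
      ext A
      simp only [Set.mem_singleton_iff, hmem A]
      constructor
      · rintro ⟨hApos, hQ⟩
        rw [hfac A] at hQ
        rcases mul_eq_zero.mp hQ with h | h
        · rcases mul_eq_zero.mp h with h | h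
          · exact absurd h (by positivity)
          · linarith [sub_eq_zero.mp h]
        · linarith [sub_eq_zero.mp h]
      · rintro rfl
        exact ⟨hA1pos, by rw [hfac]; ring⟩
  · -- 1/2 ≤ p
    intro hp2
    constructor
    · -- δ ≤ 1/p → S = ∅
      intro hd
      have hδp1 : δ*p ≤ 1 := by rw [le_div_iff₀ hp0] at hd; linarith
      have h1p2 : 1/p ≤ 2 := by rw [div_le_iff₀ hp0]; linarith
      have hδ2 : δ ≤ 2 := le_trans hd h1p2
      ext A
      simp only [Set.mem_empty_iff_false, iff_false, hmem A]
      rintro ⟨hApos, hQ⟩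
      nlinarith [mul_pos (mul_pos hcpos hcpos) (mul_pos hApos hApos),
        mul_pos hcpos hApos]
    · -- 1/p < δ → S = {A₁}
      intro hd
      have hδp1 : 1 < δ*p := by rw [div_lt_iff₀ hp0] at hd; linarith
      have h4pδ : 4*(1-p) < δ := by
        calc 4*(1-p) ≤ 1/p := by rw [le_div_iff₀ hp0]; nlinarith
        _ < δ := hd
      have hDpos : 0 < 1 - 4*(1-p)/δ := by
        rw [sub_pos, div_lt_one hδ0]; exact h4pδ
      have hs2 : s^2 = 1 - 4*(1-p)/δ := Real.sq_sqrt hDpos.le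
      have hfac := facQ μ γ p δ c s A₁ A₂ hμ hγ hδ0 hc hs2 h1 h2
      have d1 : s^2 - (1 - 2/δ)^2 = 4*(δ*p-1)/δ^2 := by
        rw [hs2]; field_simp; ring
      have hd1pos : 0 < 4*(δ*p-1)/δ^2 := by
        have : 0 < δ*p - 1 := by linarith
        positivity
      have habs : |1 - 2/δ| < s := by
        refine lt_of_pow_lt_pow_left₀ 2 hs0 ?_
        rw [sq_abs]
        nlinarith
      have habs' := abs_lt.mp habs
      have hA1pos : 0 < A₁ := by
        rw [h1]
        have : 0 < 1 - 2/δ + s := by linarith [habs'.1]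
        positivity
      have hA2np : A₂ ≤ 0 := by
        rw [h2]
        have h' : 1 - 2/δ - s ≤ 0 := by linarith [habs'.2]
        have hinvpos : 0 ≤ (1 + γ/μ)⁻¹ := by positivity
        nlinarith
      ext A
      simp only [Set.mem_singleton_iff, hmem A]
      constructor
      · rintro ⟨hApos, hQ⟩
        rw [hfac A] at hQ
        rcases mul_eq_zero.mp hQ with h | h
        · rcases mul_eq_zero.mp h with h | h
          · exact absurd h (by positivity)
          · linarith [sub_eq_zero.mp h]
        · linarith [sub_eq_zero.mp h]
      · rintro rfl
        exact ⟨hA1pos, by rw [hfac]; ring⟩
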